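/- arXiv:2204.10204 — 3 statements merged into one kernel-verified Lean document; each statement's English description precedes it below -/
import Mathlib

section
/- Let w be a word having periods k and l. If |w| ≥ k + l - gcd(k,l), then gcd(k,l) is also a period of w. -/
private theorem fw_chain {β : Type*} (f : ℕ → β) (g M : ℕ)
    (H : ∀ t, t + g < M → f t = f (t + g)) :
    ∀ c j, j + c * g < M → f j = f (j + c * g) := by
  intro c
  induction c with
  | zero => simp
  | succ c ih =>
    intro j hj
    rw [Nat.succ_mul, ← Nat.add_assoc] at hj ⊢
    have hlt : j + c * g < M := lt_of_le_of_lt (Nat.le_add_right _ g) hj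
    exact (ih j hlt).trans (H (j + c * g) hj)

private theorem fw_aux {β : Type*} (f : ℕ → β) :
    ∀ s k l n, 2 * (k + l) + (if l < k then 1 else 0) ≤ s → 0 < k → 0 < l →
    (∀ i, i + k < n → f i = f (i + k)) → (∀ i, i + l < n → f i = f (i + l)) →
    k + l - Nat.gcd k l ≤ n →
    ∀ i, i + Nat.gcd k l < n → f i = f (i + Nat.gcd k l) := by
  intro s
  induction s using Nat.strong_induction_on with
  | _ s IH =>
  intro k l n hs hk hl hpk hpl hlen
  rcases lt_trichotomy k l with hkl | rfl | hlk
  · -- k < l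
    set g := Nat.gcd k l with hg
    have hgk : g ∣ k := Nat.gcd_dvd_left k l
    have hgl : g ∣ l := Nat.gcd_dvd_right k l
    have hgpos : 0 < g := Nat.gcd_pos_of_pos_left _ hk
    have hgle : g ≤ k := Nat.le_of_dvd hk hgk
    have hglk : g ∣ l - k := Nat.dvd_sub hgl hgk
    have hglk' : g ≤ l - k := Nat.le_of_dvd (by omega) hglk
    have hn2k : 2 * k ≤ n := by omega
    have hgcd' : Nat.gcd k (l - k) = g := by
      have h1 : Nat.gcd k ((l - k) + k) = Nat.gcd k (l - k) :=
        Nat.gcd_add_self_right _ _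
      have h2 : (l - k) + k = l := by omega
      rw [h2] at h1
      rw [← h1]
    have Hpre : ∀ i, i + g < n - k → f i = f (i + g) := by
      have hif : (if l - k < k then 1 else 0) ≤ 1 := by split <;> omega
      have hmeas : 2 * (k + (l - k)) + (if l - k < k then 1 else 0) < s := by omega
      have hp1 : ∀ i, i + k < n - k → f i = f (i + k) := fun i hi => hpk i (by omega)
      have hp2 : ∀ i, i + (l - k) < n - k → f i = f (i + (l - k)) := by
        intro i hi
        have h1 : f i = f (i + l) := hpl i (by omega)
        have h2 : f (i + (l - k)) = f (i + (l - k) + k) := hpk (i + (l - k)) (by omega)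
        have h3 : i + (l - k) + k = i + l := by omega
        rw [h3] at h2
        exact h1.trans h2.symm
      have hlen' : k + (l - k) - Nat.gcd k (l - k) ≤ n - k := by rw [hgcd']; omega
      have h := IH (2 * (k + (l - k)) + (if l - k < k then 1 else 0)) hmeas
        k (l - k) (n - k) le_rfl hk (by omega) hp1 hp2 hlen'
      rw [hgcd'] at h
      exact h
    have Hc := fw_chain f g (n - k) Hpre
    intro i
    induction i using Nat.strong_induction_on with
    | _ i IH2 =>
    intro hi
    by_cases hcase : i + g < n - k
    · exact Hpre i hcase
    · by_cases hik : k ≤ i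
      · obtain ⟨j, rfl⟩ : ∃ j, i = j + k := ⟨i - k, by omega⟩
        have h1 : f j = f (j + k) := hpk j (by omega)
        have h2 : f (j + g) = f (j + g + k) := hpk (j + g) (by omega)
        have h3 : f j = f (j + g) := IH2 j (by omega) (by omega)
        have h4 : j + g + k = j + k + g := by omega
        rw [h4] at h2
        exact h1.symm.trans (h3.trans h2)
      · have hik' : k ≤ i + g := by omega
        obtain ⟨j, hj⟩ : ∃ j, i + g = j + k := ⟨i + g - k, by omega⟩
        have h1 : f j = f (j + k) := hpk j (by omega)
        obtain ⟨c, hc⟩ : g ∣ k - g := Nat.dvd_sub hgk dvd_rfl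
        have h3 : f j = f i := by
          have hi' : i = j + (k - g) := by omega
          rw [hc, Nat.mul_comm] at hi'
          rw [hi']
          exact Hc c j (by rw [← hi']; omega)
        rw [hj]
        exact h3.symm.trans h1
  · -- k = k
    simp only [Nat.gcd_self]
    exact hpk
  · -- l < k : swap
    have hs' : 2 * (l + k) + (if k < l then 1 else 0) < s := by
      rw [if_pos hlk] at hs
      rw [if_neg (by omega)]
      omega
    have h := IH (2 * (l + k) + (if k < l then 1 else 0)) hs'
      l k n le_rfl hl hk hpl hpk (by rw [Nat.gcd_comm]; omega)
    rw [Nat.gcd_comm] at h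
    exact h

/-- Fine and Wilf: if `w` has periods `k` and `l` and `|w| ≥ k + l - gcd k l`,
then `gcd k l` is a period of `w`. -/
theorem fine_and_wilf {α : Type*} (w : List α) (k l : ℕ) (hk : 0 < k) (hl : 0 < l)
    (hpk : ∀ i, i + k < w.length → w[i]? = w[i + k]?)
    (hpl : ∀ i, i + l < w.length → w[i]? = w[i + l]?)
    (hlen : k + l - Nat.gcd k l ≤ w.length) :
    ∀ i, i + Nat.gcd k l < w.length → w[i]? = w[i + Nat.gcd k l]? := by
  exact fw_aux (fun i => w[i]?) (2 * (k + l) + 1) k l w.length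
    (by split <;> omega) hk hl hpk hpl hlen
end

section
/- Three squares cannot begin at the same position with lengths in ratio at most 2: if uu, vv, ww are squares that are prefixes of the same word with |u| < |v| < |w| ≤ 2|u|, then u is not primitive. -/
/-- `k`-fold concatenation power of a word. -/
def wpow {α : Type*} (u : List α) : ℕ → List α
  | 0 => []
  | n + 1 => u ++ wpow u n

/-- A nonempty word is primitive if it is not a proper power. -/
def Primitive {α : Type*} (p : List α) : Prop :=
  p ≠ [] ∧ ∀ (u : List α) (k : ℕ), 2 ≤ k → p ≠ wpow u k

/-- `f` has period `a` on the interval `[0, n)`. -/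
def Per {α : Type*} (f : ℕ → α) (n a : ℕ) : Prop :=
  ∀ i, i + a < n → f (i + a) = f i

lemma per_sub {α : Type*} (f : ℕ → α) (a b n : ℕ) (hab : a ≤ b) (hn : a + b ≤ n)
    (Pa : Per f n a) (Pb : Per f n b) : Per f n (b - a) := by
  intro i hi
  rcases lt_or_ge (i + b) n with hib | hib
  · have h1 := Pb i hib
    have h2 := Pa (i + (b - a)) (by omega)
    have e : i + (b - a) + a = i + b := by omega
    rw [e] at h2
    rw [← h2]; exact h1
  · have h1 := Pa (i - a) (by omega)
    have h2 := Pb (i - a) (by omega)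
    have e1 : i - a + a = i := by omega
    have e2 : i - a + b = i + (b - a) := by omega
    rw [e1] at h1
    rw [e2] at h2
    rw [h2, ← h1]

/-- Weak Fine–Wilf theorem. -/
lemma finewilf_aux {α : Type*} (f : ℕ → α) :
    ∀ m a b n, a + b ≤ m → 0 < a → 0 < b → a + b ≤ n →
      Per f n a → Per f n b → Per f n (Nat.gcd a b) := by
  intro m
  induction m with
  | zero => intro a b n hm ha; omega
  | succ m ih =>
    intro a b n hm ha hb hn Pa Pb
    rcases lt_trichotomy a b with h | h | h
    · have Pba := per_sub f a b n h.le hn Pa Pb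
      have hres := ih a (b - a) n (by omega) ha (by omega) (by omega) Pa Pba
      have e : Nat.gcd a (b - a) = Nat.gcd a b := by
        conv_rhs => rw [show b = (b - a) + a by omega]
        rw [Nat.gcd_add_self_right]
      rwa [e] at hres
    · subst h
      rwa [Nat.gcd_self]
    · have Pab := per_sub f b a n h.le (by omega) Pb Pa
      have hres := ih b (a - b) n (by omega) hb (by omega) (by omega) Pb Pab
      have e : Nat.gcd b (a - b) = Nat.gcd a b := by
        rw [Nat.gcd_comm a b]
        conv_rhs => rw [show a = (a - b) + b by omega]
        rw [Nat.gcd_add_self_right]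
      rwa [e] at hres

lemma finewilf {α : Type*} (f : ℕ → α) (a b n : ℕ) (ha : 0 < a) (hb : 0 < b)
    (hn : a + b ≤ n) (Pa : Per f n a) (Pb : Per f n b) : Per f n (Nat.gcd a b) :=
  finewilf_aux f (a + b) a b n le_rfl ha hb hn Pa Pb

lemma getmod_of_per {α : Type*} (f : ℕ → α) (n h : ℕ) (hh : 0 < h) (P : Per f n h) :
    ∀ i, i < n → f i = f (i % h) := by
  intro i
  induction i using Nat.strong_induction_on with
  | _ i ih =>
    intro hi
    rcases lt_or_ge i h with hih | hih
    · rw [Nat.mod_eq_of_lt hih]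
    · have h1 := P (i - h) (by omega)
      have e : i - h + h = i := by omega
      rw [e] at h1
      rw [h1, ih (i - h) (by omega) (by omega), Nat.mod_eq_sub_mod hih]

lemma wpow_length {α : Type*} (u : List α) : ∀ n, (wpow u n).length = n * u.length
  | 0 => by simp [wpow]
  | n + 1 => by
    simp [wpow, wpow_length u n, Nat.succ_mul]
    omega

lemma wpow_getD {α : Type*} (u : List α) (a : α) (hu : u ≠ []) :
    ∀ n i, i < n * u.length → (wpow u n).getD i a = u.getD (i % u.length) a := by
  intro n
  induction n with
  | zero => intro i hi; omega
  | succ n ih =>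
    intro i hi
    have hl : 0 < u.length := List.length_pos_iff.mpr hu
    show (u ++ wpow u n).getD i a = u.getD (i % u.length) a
    rcases lt_or_ge i u.length with h | h
    · rw [List.getD_append _ _ _ _ h, Nat.mod_eq_of_lt h]
    · rw [Nat.succ_mul] at hi
      rw [List.getD_append_right _ _ _ _ h, ih (i - u.length) (by omega),
        Nat.mod_eq_sub_mod h]

lemma eq_wpow_of_period {α : Type*} (u : List α) (a : α) (hu : u ≠ []) (h : ℕ)
    (hh : 0 < h) (hdvd : h ∣ u.length)
    (P : ∀ i, i + h < u.length → u.getD (i + h) a = u.getD i a) :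
    u = wpow (u.take h) (u.length / h) := by
  have hp : 0 < u.length := List.length_pos_iff.mpr hu
  have hhp : h ≤ u.length := Nat.le_of_dvd hp hdvd
  have ht : (u.take h).length = h := by simp [Nat.min_eq_left hhp]
  have htne : u.take h ≠ [] := by
    intro hc
    have := congrArg List.length hc
    simp [ht] at this
    omega
  have hlen : (wpow (u.take h) (u.length / h)).length = u.length := by
    rw [wpow_length, ht, Nat.div_mul_cancel hdvd]
  apply List.ext_getElem (by omega)
  intro i hi1 hi2
  have e1 : u[i] = u.getD i a := (List.getD_eq_getElem u a hi1).symm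
  have e2 : (wpow (u.take h) (u.length / h))[i] =
      (wpow (u.take h) (u.length / h)).getD i a :=
    (List.getD_eq_getElem _ a hi2).symm
  rw [e1, e2]
  rw [wpow_getD (u.take h) a htne _ i (by rw [ht, Nat.div_mul_cancel hdvd]; omega)]
  rw [ht]
  have hmod : i % h < h := Nat.mod_lt i hh
  have : (u.take h).getD (i % h) a = u.getD (i % h) a := by
    rw [List.getD_eq_getElem _ a (by omega : i % h < (u.take h).length),
        List.getD_eq_getElem u a (by omega : i % h < u.length)]
    simp [List.getElem_take]
  rw [this]
  exact getmod_of_per (fun j => u.getD j a) u.length h hh P i hi1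

/-- Three squares lemma: if squares `uu`, `vv`, `ww` are prefixes of a common
word with `|u| < |v| < |w| ≤ 2|u|`, then `u` is not primitive. -/
theorem three_squares {α : Type*} (z u v w : List α)
    (hu : u ≠ []) (h1 : (u ++ u) <+: z) (h2 : (v ++ v) <+: z) (h3 : (w ++ w) <+: z)
    (huv : u.length < v.length) (hvw : v.length < w.length)
    (hw : w.length ≤ 2 * u.length) :
    ¬ Primitive u := by
  intro hprim
  have a : α := u.head hu
  set p := u.length with hp'
  set q := v.length with hq'
  set r := w.length with hr'
  have hp : 0 < p := List.length_pos_iff.mpr hu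
  set X : ℕ → α := fun i => z.getD i a with hX
  -- periodicity of z coming from a square prefix
  have sq : ∀ (x : List α), (x ++ x) <+: z → ∀ i, i < x.length →
      X (x.length + i) = X i := by
    intro x hx i hi
    obtain ⟨tl, htl⟩ := hx
    have e1 : X i = x.getD i a := by
      show z.getD i a = x.getD i a
      rw [← htl]
      rw [List.getD_append _ _ _ _ (by simp; omega), List.getD_append _ _ _ _ hi]
    have e2 : X (x.length + i) = x.getD i a := by
      show z.getD (x.length + i) a = x.getD i a
      rw [← htl]
      rw [List.getD_append _ _ _ _ (by simp; omega),
        List.getD_append_right _ _ _ _ (by omega)]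
      congr 1
      omega
    rw [e1, e2]
  have P := sq u h1
  have Q := sq v h2
  have R := sq w h3
  set U : ℕ → α := fun i => u.getD i a with hU
  have XU : ∀ i, i < p → X i = U i := by
    intro i hi
    obtain ⟨tl, htl⟩ := h1
    show z.getD i a = u.getD i a
    rw [← htl]
    rw [List.getD_append _ _ _ _ (by simp; omega), List.getD_append _ _ _ _ hi]
  set d := q - p with hd'
  set f := r - q with hf'
  have hd0 : 0 < d := by omega
  have hf0 : 0 < f := by omega
  have hq2p : q < 2 * p := by omega
  have hdp : d < p := by omega
  -- u has period d
  have Pd : Per U p d := by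
    intro i hi
    have e1 := Q i (by omega)
    have e2 := P (i + d) (by omega)
    have e3 : q + i = p + (i + d) := by omega
    rw [e3] at e1
    rw [← XU _ (by omega), ← XU _ (by omega), ← e1, e2]
  -- u has period f
  have Pf : Per U p f := by
    intro i hi
    have e1 := R i (by omega)
    have e2 := Q (i + f) (by omega)
    have e3 : r + i = q + (i + f) := by omega
    rw [e3] at e1
    rw [← XU _ (by omega), ← XU _ (by omega), ← e1, e2]
  -- the synchronization relation
  have Rel : ∀ i, i < d → i < f → U (i + (p - f)) = U i := by
    intro i hid hif
    have e1 := R (i + (p - f)) (by omega)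
    have e2 := Q (p + i) (by omega)
    have e3 := P i (by omega)
    have e4 : r + (i + (p - f)) = q + (p + i) := by omega
    rw [e4] at e1
    rw [← XU _ (by omega), ← XU _ (by omega), ← e1, e2, e3]
  set g := Nat.gcd d f with hg'
  have hg0 : 0 < g := Nat.gcd_pos_of_pos_left f hd0
  have hgd : g ≤ d := Nat.le_of_dvd hd0 (Nat.gcd_dvd_left d f)
  have hgf : g ≤ f := Nat.le_of_dvd hf0 (Nat.gcd_dvd_right d f)
  have Pg : Per U p g := finewilf U d f p hd0 hf0 (by omega) Pd Pf
  have Umod : ∀ i, i < p → U i = U (i % g) := getmod_of_per U p g hg0 Pg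
  set Y : ℕ → α := fun i => U (i % g) with hY
  -- Y has global period g
  have Yg : ∀ i, Y (i + g) = Y i := by
    intro i
    rw [hY]
    simp only [Nat.add_mod_right]
  -- Y has global period p
  have Yp : ∀ i, Y (i + p) = Y i := by
    intro i
    have hs : i % g < g := Nat.mod_lt i hg0
    set s := i % g with hs'
    have e0 : (i + p) % g = (s + p) % g := by
      rw [hs', Nat.mod_add_mod]
    obtain ⟨c, hc⟩ := Nat.gcd_dvd_right d f
    have hcf : f = c * g := by rw [hc, Nat.mul_comm]
    have e1 : s + p = (s + (p - f)) + f := by omega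
    have e2 : (s + p) % g = (s + (p - f)) % g := by
      rw [e1, hcf, Nat.add_mul_mod_self_right]
    show U ((i + p) % g) = U (i % g)
    rw [e0, e2, ← Umod _ (by omega), Rel s (by omega) (by omega)]
  have PYg : Per Y (p + g + p) g := fun i _ => Yg i
  have PYp : Per Y (p + g + p) p := fun i _ => Yp i
  set h := Nat.gcd g p with hh'
  have hh0 : 0 < h := Nat.gcd_pos_of_pos_left p hg0
  have PYh : Per Y (p + g + p) h := finewilf Y g p (p + g + p) hg0 hp (by omega) PYg PYp
  have hhp : h ∣ p := Nat.gcd_dvd_right g p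
  have hhg : h ≤ g := Nat.le_of_dvd hg0 (Nat.gcd_dvd_left g p)
  have hhltp : h < p := by omega
  -- u has period h
  have Ph : ∀ i, i + h < p → U (i + h) = U i := by
    intro i hi
    have e1 : U (i + h) = Y (i + h) := Umod _ (by omega)
    have e2 : U i = Y i := Umod _ (by omega)
    rw [e1, e2]
    exact PYh i (by omega)
  have heq := eq_wpow_of_period u a hu h hh0 hhp Ph
  obtain ⟨k, hk⟩ := hhp
  have hk2 : 2 ≤ k := by
    rcases k with _ | _ | k
    · omega
    · omega
    · omega
  have hdivk : p / h = k := by rw [hk, Nat.mul_div_cancel_left k hh0]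
  rw [hdivk] at heq
  exact hprim.2 (u.take h) k hk2 heq
end

section
/- The number of distinct palindromic factors of a finite word w (including the empty word) is at most |w| + 1. -/
private lemma palindrome_aux {α : Type*} (w u v : List α) (hu' : u.reverse = u)
    (hv' : v.reverse = v) (i : ℕ) (hsu : u <:+ w.take i) (hsv : v <:+ w.take i)
    (hi : i ≤ w.length) (hmin : ∀ j < i, ¬ u <:+ w.take j)
    (hlen : u.length < v.length) : False := by
  have husv : u <:+ v := List.suffix_of_suffix_length_le hsu hsv hlen.le
  have hupv : u <+: v := by
    have := List.reverse_prefix.mpr husv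
    rwa [hu', hv'] at this
  obtain ⟨t, ht⟩ := hupv
  obtain ⟨p, hp⟩ := hsv
  have htpos : 0 < t.length := by
    by_contra h0
    push_neg at h0
    rw [← ht] at hlen
    simp at hlen
    omega
  have h2 : (w.take i).length = i := by
    rw [List.length_take, min_eq_left hi]
  have hlenrel : (w.take i).length = p.length + u.length + t.length := by
    rw [← hp, ← ht]; simp [Nat.add_assoc]
  have key : u <:+ w.take (i - t.length) := by
    have h3 : (w.take i).take (i - t.length) = p ++ u := by
      have heq : i - t.length = p.length + u.length := by omega
      rw [heq, ← hp, ← ht, ← List.append_assoc, List.take_left' (by simp)]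
    have h1 : w.take (i - t.length) = (w.take i).take (i - t.length) := by
      rw [List.take_take, min_eq_left (Nat.sub_le _ _)]
    rw [h1, h3]
    exact List.suffix_append p u
  exact hmin (i - t.length) (by omega) key

open Classical in
/-- Droubay–Justin–Pirillo: a word `w` has at most `|w| + 1` distinct palindromic
factors (including the empty word). -/
theorem palindrome_count_le {α : Type*} (w : List α) :
    {u : List α | u <:+: w ∧ u.reverse = u}.ncard ≤ w.length + 1 := by
  set S := {u : List α | u <:+: w ∧ u.reverse = u}
  have hex : ∀ u ∈ S, ∃ i, u <:+ w.take i ∧ i ≤ w.length := by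
    rintro u ⟨⟨s, t, rfl⟩, -⟩
    refine ⟨s.length + u.length, ?_, by simp⟩
    rw [List.take_left' (l₁ := s ++ u) (by simp)]
    exact List.suffix_append s u
  let f : List α → ℕ := fun u =>
    if h : ∃ i, u <:+ w.take i then Nat.find h else 0
  have hle : ∀ u ∈ S, f u ≤ w.length := by
    intro u hu
    obtain ⟨i, hi, hile⟩ := hex u hu
    have h1 : ∃ j, u <:+ w.take j := ⟨i, hi⟩
    simp only [f, dif_pos h1]
    exact (Nat.find_min' h1 hi).trans hile
  have hinj : Set.InjOn f S := by
    intro u hu v hv huv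
    by_contra hne
    obtain ⟨iu, hiu, hiu'⟩ := hex u hu
    obtain ⟨iv, hiv, hiv'⟩ := hex v hv
    have hu1 : ∃ i, u <:+ w.take i := ⟨iu, hiu⟩
    have hv1 : ∃ i, v <:+ w.take i := ⟨iv, hiv⟩
    simp only [f, dif_pos hu1, dif_pos hv1] at huv
    have hsu : u <:+ w.take (Nat.find hu1) := Nat.find_spec hu1
    have hsv : v <:+ w.take (Nat.find hu1) := by
      rw [huv]; exact Nat.find_spec hv1
    have hile : Nat.find hu1 ≤ w.length := (Nat.find_min' hu1 hiu).trans hiu'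
    rcases lt_trichotomy u.length v.length with h | h | h
    · exact palindrome_aux w u v hu.2 hv.2 (Nat.find hu1) hsu hsv hile
        (fun j hj => Nat.find_min hu1 hj) h
    · exact hne (List.IsSuffix.eq_of_length
        (List.suffix_of_suffix_length_le hsu hsv h.le) h)
    · exact palindrome_aux w v u hv.2 hu.2 (Nat.find hu1) hsv hsu hile
        (fun j hj => by rw [huv] at hj; exact Nat.find_min hv1 hj) h
  calc S.ncard = (f '' S).ncard := (Set.ncard_image_of_injOn hinj).symm
    _ ≤ (Set.Iic w.length).ncard := by
        apply Set.ncard_le_ncard _ (Set.finite_Iic _)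
        rintro _ ⟨u, hu, rfl⟩
        exact Set.mem_Iic.mpr (hle u hu)
    _ = w.length + 1 := by
        rw [← Finset.coe_Iic, Set.ncard_coe_finset, Nat.card_Iic]
end
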